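/- In the explicit FRW shock-data setting, assume in addition σ̄ > 0, γ = σ̄/(2π𝒢(1 + 6σ̄ + σ̄²)), and 1 + 3σ > 0. Then the shock surface is lightlike, i.e. r'(t)² = 1/R(t)² for all t ∈ I (the k = 0 lightlike condition ṙ² = (1 − kr²)/R²), if and only if (1 + 3σ)²·σ̄ = 1 + 6σ̄ + σ̄² (i.e. the Minkowski-frame shock speed (1 + 3σ)·√(σ̄/(1 + 6σ̄ + σ̄²)) equals 1). -/

import Mathlib

open Real

/-- Explicit FRW shock position in barred coordinates:
`r̄(t) = √(18π𝒢γ)(1+σ)(t − t₀) + r̄₀`. -/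
noncomputable def rbarF (𝒢 γ σ t₀ rb₀ : ℝ) (t : ℝ) : ℝ :=
  Real.sqrt (18 * π * 𝒢 * γ) * (1 + σ) * (t - t₀) + rb₀

/-- Explicit FRW cosmological scale factor: `R(t) = R₀ (r̄(t)/r̄₀)^{2/(3(1+σ))}`. -/
noncomputable def RF (𝒢 γ σ t₀ rb₀ R₀ : ℝ) (t : ℝ) : ℝ :=
  R₀ * (rbarF 𝒢 γ σ t₀ rb₀ t / rb₀) ^ (2 / (3 * (1 + σ)))

/-- Shock position in unbarred FRW coordinates: `r(t) = r̄(t)/R(t)`. -/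
noncomputable def rF (𝒢 γ σ t₀ rb₀ R₀ : ℝ) (t : ℝ) : ℝ :=
  rbarF 𝒢 γ σ t₀ rb₀ t / RF 𝒢 γ σ t₀ rb₀ R₀ t

lemma key (𝒢 γ σ t₀ rb₀ R₀ : ℝ) (hσ : 0 < 1 + σ) (hrb₀ : 0 < rb₀) (hR₀ : 0 < R₀)
    (t : ℝ) (hu : 0 < rbarF 𝒢 γ σ t₀ rb₀ t) :
    deriv (rF 𝒢 γ σ t₀ rb₀ R₀) t =
      (1 - 2 / (3 * (1 + σ))) * (Real.sqrt (18 * π * 𝒢 * γ) * (1 + σ))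
        / RF 𝒢 γ σ t₀ rb₀ R₀ t := by
  set c := Real.sqrt (18 * π * 𝒢 * γ) * (1 + σ) with hc
  set p := 2 / (3 * (1 + σ)) with hp
  have hA : HasDerivAt (rbarF 𝒢 γ σ t₀ rb₀) c t := by
    have : HasDerivAt (fun s : ℝ => c * (s - t₀) + rb₀) (c * 1) t :=
      (((hasDerivAt_id t).sub_const t₀).const_mul c).add_const rb₀
    have e : rbarF 𝒢 γ σ t₀ rb₀ = fun s : ℝ => c * (s - t₀) + rb₀ := rfl
    rw [e]; exact this.congr_deriv (mul_one c)
  set u := rbarF 𝒢 γ σ t₀ rb₀ t / rb₀ with huu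
  have hu' : 0 < u := div_pos hu hrb₀
  have hB : HasDerivAt (fun s => rbarF 𝒢 γ σ t₀ rb₀ s / rb₀) (c / rb₀) t := hA.div_const rb₀
  have hC : HasDerivAt (fun s => (rbarF 𝒢 γ σ t₀ rb₀ s / rb₀) ^ p)
      (c / rb₀ * p * u ^ (p - 1)) t := hB.rpow_const (Or.inl hu'.ne')
  have hR : HasDerivAt (RF 𝒢 γ σ t₀ rb₀ R₀) (R₀ * (c / rb₀ * p * u ^ (p - 1))) t := by
    have e : RF 𝒢 γ σ t₀ rb₀ R₀ = fun y => R₀ * (rbarF 𝒢 γ σ t₀ rb₀ y / rb₀) ^ p := rfl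
    rw [e]; exact hC.const_mul R₀
  have hRpos : 0 < RF 𝒢 γ σ t₀ rb₀ R₀ t := mul_pos hR₀ (Real.rpow_pos_of_pos hu' p)
  have hr : HasDerivAt (rF 𝒢 γ σ t₀ rb₀ R₀)
      ((c * RF 𝒢 γ σ t₀ rb₀ R₀ t -
        rbarF 𝒢 γ σ t₀ rb₀ t * (R₀ * (c / rb₀ * p * u ^ (p - 1)))) /
        RF 𝒢 γ σ t₀ rb₀ R₀ t ^ 2) t := hA.div hR hRpos.ne'
  rw [hr.deriv]
  have hup : u ^ (p - 1) * u = u ^ p := by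
    rw [Real.rpow_sub_one hu'.ne', div_mul_cancel₀ _ hu'.ne']
  have hrbar : rbarF 𝒢 γ σ t₀ rb₀ t = u * rb₀ := by
    rw [huu, div_mul_cancel₀ _ hrb₀.ne']
  have hRF : RF 𝒢 γ σ t₀ rb₀ R₀ t = R₀ * u ^ p := rfl
  rw [hRF, hrbar]
  have hupne : u ^ p ≠ 0 := (Real.rpow_pos_of_pos hu' p).ne'
  clear_value u c p
  field_simp
  linear_combination (-(c * p)) * hup

/-- with `γ = σ̄/(2π𝒢(1+6σ̄+σ̄²))` and `1 + 3σ > 0`, the shock surface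
is lightlike (`r'(t)² = 1/R(t)²` for all `t` with `r̄(t) > 0`, the `k = 0` lightlike
condition) iff `(1+3σ)²σ̄ = 1 + 6σ̄ + σ̄²`, i.e. iff the Minkowski-frame shock speed
`(1+3σ)√(σ̄/(1+6σ̄+σ̄²))` equals 1. -/
theorem stmt_16 (𝒢 γ σ σb t₀ rb₀ R₀ : ℝ) (h𝒢 : 0 < 𝒢) (hγ : 0 < γ) (hσ : 0 < 1 + σ)
    (hrb₀ : 0 < rb₀) (hR₀ : 0 < R₀) (hσb : 0 < σb)
    (hγσb : γ = σb / (2 * π * 𝒢 * (1 + 6 * σb + σb ^ 2)))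
    (h3σ : 0 < 1 + 3 * σ) :
    (∀ t : ℝ, 0 < rbarF 𝒢 γ σ t₀ rb₀ t →
        deriv (rF 𝒢 γ σ t₀ rb₀ R₀) t ^ 2 = 1 / RF 𝒢 γ σ t₀ rb₀ R₀ t ^ 2) ↔
      (1 + 3 * σ) ^ 2 * σb = 1 + 6 * σb + σb ^ 2 := by
  have hπ := Real.pi_pos
  have hD : (0:ℝ) < 1 + 6 * σb + σb ^ 2 := by positivity
  set c := Real.sqrt (18 * π * 𝒢 * γ) * (1 + σ) with hc
  set p := 2 / (3 * (1 + σ)) with hp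
  have hexp : c ^ 2 = 18 * π * 𝒢 * γ * (1 + σ) ^ 2 := by
    rw [hc, mul_pow, Real.sq_sqrt (by positivity)]
  have h1p : 1 - p = (1 + 3 * σ) / (3 * (1 + σ)) := by
    rw [hp]; field_simp; ring
  have h3 : ((1 - p) * c) ^ 2 = (1 + 3 * σ) ^ 2 * σb / (1 + 6 * σb + σb ^ 2) := by
    rw [mul_pow, h1p, hexp, hγσb, div_pow]
    field_simp
    ring
  have hcc : ((1 - p) * c) ^ 2 = 1 ↔ (1 + 3 * σ) ^ 2 * σb = 1 + 6 * σb + σb ^ 2 := by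
    rw [h3, div_eq_one_iff_eq hD.ne']
  constructor
  · intro H
    have hu0 : 0 < rbarF 𝒢 γ σ t₀ rb₀ t₀ := by simpa [rbarF] using hrb₀
    have ht := H t₀ hu0
    rw [key 𝒢 γ σ t₀ rb₀ R₀ hσ hrb₀ hR₀ t₀ hu0] at ht
    have hRpos : 0 < RF 𝒢 γ σ t₀ rb₀ R₀ t₀ :=
      mul_pos hR₀ (Real.rpow_pos_of_pos (div_pos hu0 hrb₀) p)
    rw [div_pow] at ht
    have h1 : ((1 - p) * c) ^ 2 = 1 := by
      have h2 := congrArg (fun x => x * RF 𝒢 γ σ t₀ rb₀ R₀ t₀ ^ 2) ht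
      simpa [div_mul_cancel₀, pow_ne_zero 2 hRpos.ne'] using h2
    exact hcc.mp h1
  · intro H t hu
    rw [key 𝒢 γ σ t₀ rb₀ R₀ hσ hrb₀ hR₀ t hu, div_pow, hcc.mpr H]
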